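/- Let k be a natural number, let l, u : Fin k → ℝ satisfy l i ≤ u i and max(|l i|, |u i|) > 0 for all i, and set Mᵢ := max(|l i|, |u i|). Let d, e : Fin k → ℕ be exponent tuples of two monomials m and s, let n be a real number, and define the weight of an exponent tuple a as w(a) := ∑_i (a i) · log Mᵢ. Suppose w(e) ≤ w(d) and suppose that for every x in the box (l i ≤ x i ≤ u i for all i) one has ∏_i |x i|^(d i) ≤ n − 1. Then for every x in the box, ∏_i |x i|^(e i) ≤ n − 1 (monomials smaller in the weighted order inherit the liftable range bound). -/

import Mathlib

/-- Monomials smaller in the weighted order inherit the liftable range bound: with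
`Mᵢ = max |l i| |u i| > 0` and weight `w(a) = ∑ i, a i * log Mᵢ`, if `w(e) ≤ w(d)`
and the monomial with exponents `d` satisfies `∏ i, |x i| ^ (d i) ≤ n − 1` on the
whole box, then so does the monomial with exponents `e`. -/
theorem stmt_11 (k : ℕ) (l u : Fin k → ℝ) (hlu : ∀ i, l i ≤ u i)
    (hpos : ∀ i, 0 < max |l i| |u i|)
    (d e : Fin k → ℕ) (n : ℝ)
    (hw : (∑ i, (e i : ℝ) * Real.log (max |l i| |u i|)) ≤
          (∑ i, (d i : ℝ) * Real.log (max |l i| |u i|)))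
    (hd : ∀ x : Fin k → ℝ, (∀ i, l i ≤ x i ∧ x i ≤ u i) →
      (∏ i, |x i| ^ (d i)) ≤ n - 1) :
    ∀ x : Fin k → ℝ, (∀ i, l i ≤ x i ∧ x i ≤ u i) →
      (∏ i, |x i| ^ (e i)) ≤ n - 1 := by
  intro x hx
  set M : Fin k → ℝ := fun i => max |l i| |u i| with hM
  set y : Fin k → ℝ := fun i => if |l i| ≤ |u i| then u i else l i with hy
  have hybox : ∀ i, l i ≤ y i ∧ y i ≤ u i := by
    intro i
    simp only [hy]
    split <;> exact ⟨by first | exact hlu i | exact le_refl _,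
      by first | exact hlu i | exact le_refl _⟩
  have hyM : ∀ i, |y i| = M i := by
    intro i
    simp only [hy, hM]
    split_ifs with h
    · exact (max_eq_right h).symm
    · exact (max_eq_left (le_of_not_ge h)).symm
  -- log of products
  have hlogprod : ∀ a : Fin k → ℕ,
      Real.log (∏ i, M i ^ a i) = ∑ i, (a i : ℝ) * Real.log (M i) := by
    intro a
    rw [Real.log_prod (fun i _ => pow_ne_zero _ (ne_of_gt (hpos i)))]
    apply Finset.sum_congr rfl
    intro i _; rw [Real.log_pow]
  have hMd : (∏ i, M i ^ d i) ≤ n - 1 := by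
    have := hd y hybox
    simpa [hyM] using this
  have hMe : (∏ i, M i ^ e i) ≤ (∏ i, M i ^ d i) := by
    have h1 : (0 : ℝ) < ∏ i, M i ^ e i :=
      Finset.prod_pos fun i _ => pow_pos (hpos i) _
    have h2 : (0 : ℝ) < ∏ i, M i ^ d i :=
      Finset.prod_pos fun i _ => pow_pos (hpos i) _
    have := hw
    rw [← hlogprod e, ← hlogprod d] at this
    exact (Real.log_le_log_iff h1 h2).mp this
  calc (∏ i, |x i| ^ e i) ≤ ∏ i, M i ^ e i := by
        apply Finset.prod_le_prod
        · intro i _; positivity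
        · intro i _
          apply pow_le_pow_left₀ (abs_nonneg _)
          exact abs_le_max_abs_abs (hx i).1 (hx i).2
    _ ≤ ∏ i, M i ^ d i := hMe
    _ ≤ n - 1 := hMd
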